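/- Let N ≥ 0, let τ_0, …, τ_N be an injective enumeration of the N+1 roots of the right Radau polynomial R_{N+1}, and let φ_0, …, φ_N be the Lagrange basis at these nodes. Then the basis is L²(0,1)-orthogonal: for all p ≠ q, ∫₀¹ φ_p(τ)·φ_q(τ) dτ = 0; equivalently, the mass matrix M_pq := ∫₀¹ φ_p φ_q dτ is diagonal. -/

import Mathlib

open Polynomial

/-- Shifted Legendre polynomial on `[0,1]` via the Rodrigues formula. -/
noncomputable def shLegendre (n : ℕ) : Polynomial ℝ :=
  (n.factorial : ℝ)⁻¹ • derivative^[n] ((X ^ 2 - X) ^ n)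

/-- Right Radau polynomial `R_N = ((-1)^N/2) (L_N - L_{N-1})`. -/
noncomputable def rightRadau (N : ℕ) : Polynomial ℝ :=
  ((-1 : ℝ) ^ N / 2) • (shLegendre N - shLegendre (N - 1))

/- ### Auxiliary integration lemmas -/

lemma polyInt2 (p q : Polynomial ℝ) :
    IntervalIntegrable (fun x => p.eval x * q.eval x) MeasureTheory.volume 0 1 :=
  (p.continuous.mul q.continuous).intervalIntegrable _ _

lemma polyFTC (p : Polynomial ℝ) :
    ∫ t in (0:ℝ)..1, p.derivative.eval t = p.eval 1 - p.eval 0 := by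
  apply intervalIntegral.integral_eq_sub_of_hasDerivAt (f := fun x => p.eval x)
  · exact fun x _ => p.hasDerivAt x
  · exact p.derivative.continuous.intervalIntegrable _ _

lemma polyParts (f g : Polynomial ℝ) :
    ∫ t in (0:ℝ)..1, f.derivative.eval t * g.eval t =
      (f.eval 1 * g.eval 1 - f.eval 0 * g.eval 0)
        - ∫ t in (0:ℝ)..1, f.eval t * g.derivative.eval t := by
  have h := polyFTC (f * g)
  simp only [derivative_mul, eval_add, eval_mul] at h
  rw [intervalIntegral.integral_add (polyInt2 f.derivative g) (polyInt2 f g.derivative)] at h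
  linarith

/- ### Vanishing of iterated derivatives of `(X²-X)^n` at the boundary -/

lemma dvd_derivative_of_pow_dvd {a : ℝ} {k : ℕ} {p : Polynomial ℝ}
    (h : (X - C a) ^ k ∣ p) : (X - C a) ^ (k - 1) ∣ p.derivative := by
  cases k with
  | zero => simp
  | succ j =>
    obtain ⟨q, rfl⟩ := h
    rw [derivative_mul, derivative_pow]
    simp only [Nat.succ_sub_one, derivative_X_sub_C, mul_one]
    exact dvd_add (dvd_mul_of_dvd_left (dvd_mul_left _ _) _)
      (dvd_mul_of_dvd_left (pow_dvd_pow _ (Nat.le_succ j)) _)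

lemma pow_dvd_iterate_derivative {a : ℝ} {k m : ℕ} {p : Polynomial ℝ}
    (h : (X - C a) ^ k ∣ p) : (X - C a) ^ (k - m) ∣ derivative^[m] p := by
  induction m generalizing p k with
  | zero => simpa using h
  | succ m ih =>
    rw [Function.iterate_succ_apply]
    have := ih (dvd_derivative_of_pow_dvd h)
    rwa [Nat.sub_sub, Nat.add_comm] at this

lemma vanish_boundary (n m : ℕ) (hm : m < n) (a : ℝ) (ha : a = 0 ∨ a = 1) :
    (derivative^[m] ((X ^ 2 - X : Polynomial ℝ) ^ n)).eval a = 0 := by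
  have hfac : (X ^ 2 - X : Polynomial ℝ) = (X - C 0) * (X - C 1) := by ring_nf; simp
  have key : ∀ b : ℝ, (X - C b) ^ n ∣ (X ^ 2 - X : Polynomial ℝ) ^ n →
      (derivative^[m] ((X ^ 2 - X : Polynomial ℝ) ^ n)).eval b = 0 := by
    intro b hb
    have h2 := pow_dvd_iterate_derivative (m := m) hb
    obtain ⟨q, hq⟩ := (dvd_pow_self (X - C b) (Nat.sub_ne_zero_of_lt hm)).trans h2
    simp [hq]
  rcases ha with rfl | rfl
  · exact key 0 (pow_dvd_pow_of_dvd ⟨X - C 1, hfac⟩ n)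
  · exact key 1 (pow_dvd_pow_of_dvd ⟨X - C 0, by rw [hfac, mul_comm]⟩ n)

/- ### Repeated integration by parts -/

lemma parts_shift (n : ℕ) (j : ℕ) (hj : j ≤ n) (g : Polynomial ℝ) :
    ∫ t in (0:ℝ)..1, (derivative^[n] ((X ^ 2 - X : Polynomial ℝ) ^ n)).eval t * g.eval t
      = (-1) ^ j * ∫ t in (0:ℝ)..1,
          (derivative^[n - j] ((X ^ 2 - X : Polynomial ℝ) ^ n)).eval t
            * (derivative^[j] g).eval t := by
  induction j with
  | zero => simp
  | succ j ih =>
    rw [ih (le_of_lt hj)]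
    have hstep : n - j = (n - (j + 1)) + 1 := by omega
    have h1 : derivative^[n - j] ((X ^ 2 - X : Polynomial ℝ) ^ n)
        = (derivative^[n - (j + 1)] ((X ^ 2 - X : Polynomial ℝ) ^ n)).derivative := by
      rw [hstep, Function.iterate_succ_apply']
    rw [h1, polyParts]
    rw [vanish_boundary n (n - (j+1)) (by omega) 0 (Or.inl rfl),
        vanish_boundary n (n - (j+1)) (by omega) 1 (Or.inr rfl)]
    rw [← Function.iterate_succ_apply' derivative j g]
    ring

/- ### Orthogonality of the (shifted) Legendre and Radau polynomials -/

lemma shLegendre_orth (n : ℕ) (g : Polynomial ℝ) (hg : g.natDegree < n) :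
    ∫ t in (0:ℝ)..1, (shLegendre n).eval t * g.eval t = 0 := by
  have core : ∫ t in (0:ℝ)..1,
      (derivative^[n] ((X ^ 2 - X : Polynomial ℝ) ^ n)).eval t * g.eval t = 0 := by
    rw [parts_shift n n le_rfl g, Polynomial.iterate_derivative_eq_zero hg]
    simp
  rw [shLegendre]
  simp only [eval_smul, smul_eq_mul, mul_assoc]
  rw [intervalIntegral.integral_const_mul, core, mul_zero]

lemma rightRadau_orth (N : ℕ) (g : Polynomial ℝ) (hg : g.natDegree < N) :
    ∫ t in (0:ℝ)..1, (rightRadau (N + 1)).eval t * g.eval t = 0 := by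
  rw [rightRadau, Nat.add_sub_cancel]
  simp only [eval_smul, eval_sub, smul_eq_mul, mul_assoc, sub_mul]
  rw [intervalIntegral.integral_const_mul,
    intervalIntegral.integral_sub (polyInt2 (shLegendre (N+1)) g) (polyInt2 (shLegendre N) g),
    shLegendre_orth (N + 1) g (by omega), shLegendre_orth N g hg]
  simp

/- ### Degree and leading coefficient facts -/

lemma monic_w1 : (X ^ 2 - X : Polynomial ℝ).Monic :=
  monic_X_pow_sub (by simp [degree_X])

lemma monic_w (n : ℕ) : ((X ^ 2 - X : Polynomial ℝ) ^ n).Monic := monic_w1.pow n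

lemma natDegree_w (n : ℕ) : ((X ^ 2 - X : Polynomial ℝ) ^ n).natDegree = 2 * n := by
  rw [monic_w1.natDegree_pow]
  have : (X ^ 2 - X : Polynomial ℝ).natDegree = 2 := by compute_degree!
  rw [this, Nat.mul_comm]

lemma coeff_iter (n : ℕ) :
    (derivative^[n] ((X ^ 2 - X : Polynomial ℝ) ^ n)).coeff n = (n + n).descFactorial n := by
  rw [Polynomial.coeff_iterate_derivative]
  have h2 : ((X ^ 2 - X : Polynomial ℝ) ^ n).coeff (n + n) = 1 := by
    have := (monic_w n).coeff_natDegree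
    rwa [natDegree_w, two_mul] at this
  rw [h2]
  simp

lemma natDegree_shLegendre_le (n : ℕ) : (shLegendre n).natDegree ≤ n := by
  rw [shLegendre]
  refine (natDegree_smul_le _ _).trans ?_
  refine (Polynomial.natDegree_iterate_derivative _ n).trans ?_
  rw [natDegree_w]; omega

lemma coeff_shLegendre_ne (n : ℕ) : (shLegendre n).coeff n ≠ 0 := by
  rw [shLegendre, coeff_smul, coeff_iter, smul_eq_mul]
  have h1 : (0:ℝ) < (n.factorial : ℝ)⁻¹ := by positivity
  have h2 : (0:ℝ) < ((n + n).descFactorial n : ℝ) := by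
    have h : (n+n).descFactorial n ≠ 0 := by
      rw [Ne, Nat.descFactorial_eq_zero_iff_lt]; omega
    exact_mod_cast Nat.pos_of_ne_zero h
  positivity

lemma coeff_rightRadau_ne (N : ℕ) : (rightRadau (N + 1)).coeff (N + 1) ≠ 0 := by
  rw [rightRadau, coeff_smul, Nat.add_sub_cancel, coeff_sub, smul_eq_mul]
  rw [coeff_eq_zero_of_natDegree_lt ((natDegree_shLegendre_le N).trans_lt (by omega))]
  have h2 : ((-1 : ℝ) ^ (N+1) / 2) ≠ 0 := by
    simp [_root_.div_eq_zero_iff, pow_ne_zero]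
  simp only [sub_zero]
  exact mul_ne_zero h2 (coeff_shLegendre_ne (N + 1))

lemma natDegree_rightRadau (N : ℕ) : (rightRadau (N + 1)).natDegree = N + 1 := by
  refine le_antisymm ?_ (le_natDegree_of_ne_zero (coeff_rightRadau_ne N))
  rw [rightRadau]
  refine (natDegree_smul_le _ _).trans ?_
  refine (natDegree_sub_le _ _).trans ?_
  simp only [Nat.add_sub_cancel, sup_le_iff]
  exact ⟨natDegree_shLegendre_le _, (natDegree_shLegendre_le N).trans (by omega)⟩

lemma rightRadau_ne_zero (N : ℕ) : rightRadau (N + 1) ≠ 0 := fun h => by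
  have := coeff_rightRadau_ne N; rw [h] at this; simp at this

/- ### Product of linear factors divides a polynomial vanishing at distinct points -/

lemma prod_roots_dvd (s : Finset ℝ) (p : Polynomial ℝ) (h : ∀ a ∈ s, p.eval a = 0) :
    (∏ a ∈ s, (X - C a)) ∣ p := by
  induction s using Finset.induction generalizing p with
  | empty => simp
  | @insert a s ha ih =>
    rw [Finset.prod_insert ha]
    obtain ⟨q, rfl⟩ := dvd_iff_isRoot.mpr (h a (Finset.mem_insert_self a s))
    refine mul_dvd_mul_left _ (ih q ?_)
    intro b hb
    have hba : b ≠ a := fun hba => ha (hba ▸ hb)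
    have := h b (Finset.mem_insert_of_mem hb)
    simp only [eval_mul, eval_sub, eval_X, eval_C] at this
    rcases mul_eq_zero.mp this with h0 | h0
    · exact absurd (by linarith [sub_eq_zero.mp h0] : b = a) hba
    · exact h0

/-- The Lagrange basis built at the Gauss–Radau nodes (roots of `R_{N+1}`) is
`L²(0,1)`-orthogonal: the mass matrix `M_pq = ∫₀¹ φ_p φ_q` is diagonal. -/
theorem gaussRadau_lagrangeBasis_orthogonal (N : ℕ) (τ : Fin (N + 1) → ℝ)
    (hτ : Function.Injective τ)
    (hroot : ∀ i, (rightRadau (N + 1)).eval (τ i) = 0)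
    (φ : Fin (N + 1) → Polynomial ℝ)
    (hdeg : ∀ p, (φ p).degree ≤ (N : WithBot ℕ))
    (hval : ∀ p k, (φ p).eval (τ k) = if p = k then 1 else 0) :
    ∀ p q, p ≠ q → ∫ t in (0:ℝ)..1, (φ p).eval t * (φ q).eval t = 0 := by
  intro p q hpq
  -- N ≥ 1 since Fin (N+1) has two distinct elements
  have hN : 1 ≤ N := by
    by_contra h
    have : N = 0 := by omega
    subst this
    exact hpq (by omega)
  set S : Finset ℝ := Finset.image τ Finset.univ with hS
  set P : Polynomial ℝ := ∏ a ∈ S, (X - C a) with hP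
  have hPmonic : P.Monic := monic_prod_of_monic _ _ (fun a _ => monic_X_sub_C a)
  have hPdeg : P.natDegree = N + 1 := by
    rw [hP, natDegree_prod _ _ (fun a _ => X_sub_C_ne_zero a)]
    simp [hS, Finset.card_image_of_injective _ hτ]
  -- P divides rightRadau (N+1)
  have hPR : P ∣ rightRadau (N + 1) := by
    refine prod_roots_dvd _ _ ?_
    intro a ha
    obtain ⟨i, _, rfl⟩ := Finset.mem_image.mp ha
    exact hroot i
  obtain ⟨u, hu⟩ := hPR
  have hu0 : u ≠ 0 := fun h => rightRadau_ne_zero N (by rw [hu, h, mul_zero])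
  have hudeg : u.natDegree = 0 := by
    have := natDegree_rightRadau N
    rw [hu, natDegree_mul (hPmonic.ne_zero) hu0, hPdeg] at this
    omega
  obtain ⟨c, rfl⟩ := natDegree_eq_zero.mp hudeg
  have hc : c ≠ 0 := fun h => hu0 (by rw [h, map_zero])
  -- P divides φ p * φ q
  have hPdvd : P ∣ φ p * φ q := by
    refine prod_roots_dvd _ _ ?_
    intro a ha
    obtain ⟨i, _, rfl⟩ := Finset.mem_image.mp ha
    rw [eval_mul, hval p i, hval q i]
    rcases eq_or_ne p i with rfl | hpi
    · simp [if_neg (fun h : q = p => hpq h.symm)]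
    · simp [if_neg hpi]
  obtain ⟨s, hs⟩ := hPdvd
  -- degree bound on s
  have hsdeg : s.natDegree < N := by
    rcases eq_or_ne s 0 with rfl | hs0
    · simp; omega
    · have h1 : (φ p * φ q).natDegree ≤ 2 * N := by
        refine (natDegree_mul_le).trans ?_
        have h2 := natDegree_le_iff_degree_le.mpr (hdeg p)
        have h3 := natDegree_le_iff_degree_le.mpr (hdeg q)
        omega
      rw [hs, natDegree_mul hPmonic.ne_zero hs0, hPdeg] at h1
      omega
  -- rewrite the integrand
  have hint : ∀ t : ℝ, (φ p).eval t * (φ q).eval t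
      = c⁻¹ * ((rightRadau (N + 1)).eval t * s.eval t) := by
    intro t
    have h1 : (rightRadau (N + 1)).eval t = P.eval t * c := by rw [hu, eval_mul, eval_C]
    rw [← eval_mul, hs, eval_mul, h1]
    field_simp
  calc ∫ t in (0:ℝ)..1, (φ p).eval t * (φ q).eval t
      = ∫ t in (0:ℝ)..1, c⁻¹ * ((rightRadau (N + 1)).eval t * s.eval t) := by
        simp only [hint]
    _ = c⁻¹ * ∫ t in (0:ℝ)..1, (rightRadau (N + 1)).eval t * s.eval t :=
        intervalIntegral.integral_const_mul _ _
    _ = 0 := by rw [rightRadau_orth N s hsdeg, mul_zero]
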